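/- Let q ≥ 2, n ≥ 1 and d ≥ 1 be integers and let C ⊆ C_{q,n} be a nonempty HF code in which any two distinct codewords have Hamming distance at least d, with M = |C|. Let Ū = (1/M) · Σ_{c ∈ C} Σ_{r=0}^{⌊(d−1)/2⌋} |H_r(c)| (a positive rational number). Then M ≤ ⌊ q(q−1)^{n−1} / Ū ⌋. -/

import Mathlib

open scoped Classical

/-- A sequence `a` of length `n` over an alphabet of size `q` is homopolymer free (HF)
if no two consecutive symbols are equal. -/
def isHF {q n : ℕ} (a : Fin n → Fin q) : Prop :=
  ∀ i : ℕ, ∀ h : i + 1 < n, a ⟨i, by omega⟩ ≠ a ⟨i + 1, h⟩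

/-- `HFset q n` is the set `C_{q,n}` of all HF sequences of length `n`. -/
noncomputable def HFset (q n : ℕ) : Finset (Fin n → Fin q) :=
  Finset.univ.filter isHF

noncomputable def enc {q n : ℕ} (a : Fin n → Fin q) (hq : 2 ≤ q) (hn : 1 ≤ n) :
    Fin q × (Fin (n-1) → Fin (q-1)) :=
  (a ⟨0, hn⟩, fun i =>
    if h : (a ⟨i.val+1, by have := i.isLt; omega⟩).val < (a ⟨i.val, by have := i.isLt; omega⟩).val
    then ⟨(a ⟨i.val+1, by have := i.isLt; omega⟩).val, by
      have := (a ⟨i.val, by have := i.isLt; omega⟩).isLt; omega⟩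
    else ⟨(a ⟨i.val+1, by have := i.isLt; omega⟩).val - 1, by
      have h1 := (a ⟨i.val+1, by have := i.isLt; omega⟩).isLt
      have h2 := (a ⟨i.val, by have := i.isLt; omega⟩).isLt
      omega⟩)

lemma hf_card_le {q n : ℕ} (hq : 2 ≤ q) (hn : 1 ≤ n) :
    (HFset q n).card ≤ q * (q-1)^(n-1) := by
  have := Finset.card_le_card_of_injOn (fun a => enc a hq hn)
    (fun a _ => Finset.mem_univ _) (s := HFset q n)
    (t := (Finset.univ : Finset (Fin q × (Fin (n-1) → Fin (q-1)))))
    ?_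
  · simpa using this
  · intro a ha b hb hab
    have hha : isHF a := by simpa [HFset, isHF] using (Finset.mem_filter.mp ha).2
    have hhb : isHF b := by simpa [HFset, isHF] using (Finset.mem_filter.mp hb).2
    have h0 : a ⟨0, hn⟩ = b ⟨0, hn⟩ := congrArg Prod.fst hab
    have hsnd := congrArg Prod.snd hab
    have key : ∀ k, ∀ h : k < n, a ⟨k, h⟩ = b ⟨k, h⟩ := by
      intro k
      induction k with
      | zero => intro h; exact h0
      | succ k ih =>
        intro h
        have hk : k < n := by omega
        have ihk := ih hk
        have hi := congrFun hsnd ⟨k, by omega⟩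
        simp only [enc] at hi
        have hna := hha k h
        have hnb := hhb k h
        have hna' : (a ⟨k+1, h⟩).val ≠ (a ⟨k, hk⟩).val := fun e => hna (Fin.ext e).symm
        have hnb' : (b ⟨k+1, h⟩).val ≠ (b ⟨k, hk⟩).val := fun e => hnb (Fin.ext e).symm
        have hv : (a ⟨k, hk⟩).val = (b ⟨k, hk⟩).val := congrArg Fin.val ihk
        apply Fin.ext
        split_ifs at hi with h1 h2 h2 <;>
          (have := congrArg Fin.val hi; simp at this; omega)
    funext i
    have := key i.val i.isLt
    simpa using this

/-- The HF sphere `H_r(a)`: all HF sequences at Hamming distance exactly `r` from `a`. -/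
noncomputable def HFsphere {q n : ℕ} (a : Fin n → Fin q) (r : ℕ) :
    Finset (Fin n → Fin q) :=
  (HFset q n).filter (fun z => hammingDist a z = r)

/-- `Ū` is the average over codewords `c ∈ C` of `Σ_{r=0}^{⌊(d−1)/2⌋} |H_r(c)|`,
and `M = |C| ≤ ⌊q(q−1)^{n−1}/Ū⌋`. -/
theorem stmt_15 (q n d : ℕ) (hq : 2 ≤ q) (hn : 1 ≤ n) (hd : 1 ≤ d)
    (C : Finset (Fin n → Fin q)) (hC : C ⊆ HFset q n) (hne : C.Nonempty)
    (hdist : ∀ c₁ ∈ C, ∀ c₂ ∈ C, c₁ ≠ c₂ → d ≤ hammingDist c₁ c₂)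
    (U : ℚ)
    (hU : U = (∑ c ∈ C, ∑ r ∈ Finset.range ((d - 1) / 2 + 1),
      ((HFsphere c r).card : ℚ)) / (C.card : ℚ)) :
    (C.card : ℤ) ≤ ⌊((q : ℚ) * ((q : ℚ) - 1) ^ (n - 1)) / U⌋ := by
  set e := (d - 1) / 2 with he
  set B : (Fin n → Fin q) → Finset (Fin n → Fin q) :=
    fun c => (Finset.range (e+1)).biUnion (fun r => HFsphere c r) with hB
  -- inner sums
  have hinner : ∀ c, (B c).card = ∑ r ∈ Finset.range (e+1), (HFsphere c r).card := by
    intro c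
    apply Finset.card_biUnion
    intro r₁ _ r₂ _ hne12
    rw [Function.onFun, Finset.disjoint_left]
    intro z hz1 hz2
    simp only [HFsphere, Finset.mem_filter] at hz1 hz2
    exact hne12 (hz1.2 ▸ hz2.2 ▸ rfl)
  have houter : (C.biUnion B).card = ∑ c ∈ C, (B c).card := by
    apply Finset.card_biUnion
    intro c₁ h₁ c₂ h₂ hne12
    rw [Function.onFun, Finset.disjoint_left]
    intro z hz1 hz2
    simp only [hB, Finset.mem_biUnion, Finset.mem_range, HFsphere,
      Finset.mem_filter] at hz1 hz2
    obtain ⟨r₁, hr₁, _, hd₁⟩ := hz1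
    obtain ⟨r₂, hr₂, _, hd₂⟩ := hz2
    have ht := hammingDist_triangle c₁ c₂ z
    have ht2 : hammingDist z c₂ = hammingDist c₂ z := hammingDist_comm z c₂
    have := hdist c₁ h₁ c₂ h₂ hne12
    have htr : hammingDist c₁ c₂ ≤ r₁ + r₂ := by
      calc hammingDist c₁ c₂ ≤ hammingDist c₁ z + hammingDist z c₂ :=
            hammingDist_triangle c₁ z c₂
        _ = r₁ + r₂ := by rw [hd₁, ht2, hd₂]
    omega
  have hsub : C.biUnion B ⊆ HFset q n := by
    intro z hz
    simp only [Finset.mem_biUnion, hB, HFsphere, Finset.mem_filter] at hz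
    obtain ⟨c, _, r, _, hz, _⟩ := hz
    exact hz
  have hS : ∑ c ∈ C, ∑ r ∈ Finset.range (e+1), (HFsphere c r).card
      ≤ q * (q-1)^(n-1) := by
    calc ∑ c ∈ C, ∑ r ∈ Finset.range (e+1), (HFsphere c r).card
        = (C.biUnion B).card := by rw [houter]; exact Finset.sum_congr rfl fun c _ => (hinner c).symm
      _ ≤ (HFset q n).card := Finset.card_le_card hsub
      _ ≤ q * (q-1)^(n-1) := hf_card_le hq hn
  have h0m : 0 ∈ Finset.range (e+1) := Finset.mem_range.mpr (Nat.succ_pos e)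
  have hSM : C.card ≤ ∑ c ∈ C, ∑ r ∈ Finset.range (e+1), (HFsphere c r).card := by
    have h1 : ∀ c ∈ C, 1 ≤ ∑ r ∈ Finset.range (e+1), (HFsphere c r).card := by
      intro c hc
      have hc0 : c ∈ HFsphere c 0 := by
        simp only [HFsphere, Finset.mem_filter]
        exact ⟨hC hc, hammingDist_self c⟩
      have h2 : 1 ≤ (HFsphere c 0).card := Finset.card_pos.mpr ⟨c, hc0⟩
      exact le_trans h2 (Finset.single_le_sum (f := fun r => (HFsphere c r).card)
        (fun r _ => Nat.zero_le _) h0m)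
    calc C.card = ∑ _c ∈ C, 1 := by simp
      _ ≤ _ := Finset.sum_le_sum h1
  have hMn : 0 < C.card := Finset.card_pos.mpr hne
  have hM : (0:ℚ) < (C.card:ℚ) := by exact_mod_cast hMn
  have hScast : (∑ c ∈ C, ∑ r ∈ Finset.range (e+1), ((HFsphere c r).card : ℚ))
      = ((∑ c ∈ C, ∑ r ∈ Finset.range (e+1), (HFsphere c r).card : ℕ) : ℚ) := by
    push_cast
    rfl
  have hSpos : (0:ℚ) < ∑ c ∈ C, ∑ r ∈ Finset.range (e+1), ((HFsphere c r).card : ℚ) := by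
    rw [hScast]
    have hle : ((C.card : ℕ):ℚ) ≤ _ := Nat.cast_le.mpr hSM
    have : (0:ℚ) < ((C.card : ℕ):ℚ) := hM
    linarith
  have hUpos : 0 < U := by rw [hU]; exact div_pos hSpos hM
  have hNQ : ((q * (q-1)^(n-1) : ℕ) : ℚ) = (q : ℚ) * ((q:ℚ) - 1) ^ (n-1) := by
    push_cast [Nat.cast_sub (show 1 ≤ q by omega)]
    ring
  have hMU : (C.card : ℚ) * U
      = ∑ c ∈ C, ∑ r ∈ Finset.range (e+1), ((HFsphere c r).card : ℚ) := by
    rw [hU, mul_comm]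
    exact div_mul_cancel₀ _ hM.ne'
  have hfin : ((C.card : ℚ)) ≤ ((q : ℚ) * ((q:ℚ) - 1) ^ (n-1)) / U := by
    rw [le_div_iff₀ hUpos, hMU, hScast, ← hNQ]
    exact_mod_cast hS
  rw [Int.le_floor]
  exact_mod_cast hfin
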